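/- For every natural number n > 1, B_n has a primitive prime divisor, i.e., there exists a prime p dividing B_n such that p does not divide B_m for any 0 < m < n. -/

import Mathlib

open ArithmeticFunction Finset
open scoped ArithmeticFunction.Moebius ArithmeticFunction.Omega ArithmeticFunction.zeta

def B : ℕ → ℕ
  | 0 => 0
  | 1 => 1
  | (n + 2) => 6 * B (n + 1) - B n

lemma B_zero : B 0 = 0 := rfl
lemma B_one : B 1 = 1 := rfl
lemma B_ss (n : ℕ) : B (n+2) = 6 * B (n+1) - B n := rfl

lemma B_mono (n : ℕ) : B n ≤ B (n+1) := by
  induction n using Nat.strong_induction_on with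
  | _ n ih =>
    match n with
    | 0 => simp [B]
    | 1 => simp [B]
    | (m+2) =>
      have h2 := ih m (by omega)
      have e1 : B (m+2) = 6 * B (m+1) - B m := B_ss m
      have e2 : B (m+2+1) = 6 * B (m+2) - B (m+1) := B_ss (m+1)
      omega

lemma B_rec (n : ℕ) : B (n+2) + B n = 6 * B (n+1) := by
  have h := B_mono n
  have e1 : B (n+2) = 6 * B (n+1) - B n := B_ss n
  omega

lemma B_pos {n : ℕ} (h : 0 < n) : 0 < B n := by
  have : ∀ m, 0 < B (m+1) := by
    intro m
    induction m with
    | zero => simp [B]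
    | succ k ih => have := B_mono (k+1); omega
  obtain ⟨m, rfl⟩ := Nat.exists_eq_succ_of_ne_zero h.ne'
  exact this m


lemma three_B_le (n : ℕ) : 3 * B n ≤ B (n+1) := by
  cases n with
  | zero => simp [B]
  | succ m =>
    have h1 := B_rec m
    have h2 := B_mono m
    have e : B (m+1+1) = B (m+2) := rfl
    omega

/-- companion sequence: `α^n = C n + 2 B n √2` where `α = 3 + 2√2`. -/
def C (n : ℕ) : ℕ := B (n+1) - 3 * B n

lemma C_zero : C 0 = 1 := rfl
lemma C_spec (n : ℕ) : B (n+1) = 3 * B n + C n := by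
  have := three_B_le n; unfold C; omega

lemma C_succ (n : ℕ) : C (n+1) = 3 * C n + 8 * B n := by
  have h1 := C_spec n
  have h2 := C_spec (n+1)
  have h3 := B_rec n
  have e : B (n+1+1) = B (n+2) := rfl
  omega

lemma C_pos (n : ℕ) : 0 < C n := by
  induction n with
  | zero => simp [C_zero]
  | succ m ih => rw [C_succ]; omega

lemma C_sq (n : ℕ) : C n ^ 2 = 8 * B n ^ 2 + 1 := by
  induction n with
  | zero => norm_num [C_zero, B_zero]
  | succ k ih =>
    rw [C_succ, C_spec]
    nlinarith [ih]

lemma BC_add (a b : ℕ) : B (a+b) = B a * C b + C a * B b ∧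
    C (a+b) = C a * C b + 8 * B a * B b := by
  induction b with
  | zero => norm_num [C_zero, B_zero]
  | succ k ih =>
    obtain ⟨ihB, ihC⟩ := ih
    have e : a + (k+1) = (a+k) + 1 := by omega
    rw [e, C_spec (a+k), C_succ (a+k), C_spec k, C_succ k, ihB, ihC]
    constructor <;> ring

lemma B_add (a b : ℕ) : B (a+b) = B a * C b + C a * B b := (BC_add a b).1
lemma C_add (a b : ℕ) : C (a+b) = C a * C b + 8 * B a * B b := (BC_add a b).2

lemma pow_aux (s t : ℕ) : t * C s ^ (t-1) * C s = t * C s ^ t := by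
  cases t with
  | zero => simp
  | succ u => rw [show u+1-1 = u from rfl, mul_assoc, ← pow_succ]

/-- binomial-type expansion for `B (s*t)` and `C (s*t)`. -/
lemma BC_mul (s t : ℕ) : ∃ j k : ℕ,
    C (s*t) = C s ^ t + 8 * B s ^ 2 * j ∧
    B (s*t) = t * C s ^ (t-1) * B s + 8 * B s ^ 3 * k := by
  induction t with
  | zero => exact ⟨0, 0, by norm_num [C_zero, B_zero]⟩
  | succ t ih =>
    obtain ⟨j, k, hC, hB⟩ := ih
    refine ⟨j * C s + t * C s ^ (t-1) + 8 * B s ^ 2 * k, k * C s + j, ?_, ?_⟩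
    · rw [show s*(t+1) = s*t + s by ring, C_add, hC, hB]
      ring
    · rw [show s*(t+1) = s*t + s by ring, B_add, hC, hB]
      have expand : (t * C s ^ (t-1) * B s + 8 * B s ^3 * k) * C s + (C s ^ t + 8 * B s^2 * j) * B s
          = (t * C s ^(t-1) * C s) * B s + C s ^ t * B s + 8 * B s ^3 * (k * C s + j) := by ring
      rw [expand, pow_aux]
      have e2 : t+1-1 = t := rfl
      rw [e2]
      ring

lemma B_dvd_mul (s t : ℕ) : B s ∣ B (s*t) := by
  obtain ⟨j, k, _, hB⟩ := BC_mul s t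
  exact ⟨t * C s ^ (t-1) + 8 * B s ^ 2 * k, by rw [hB]; ring⟩

lemma B_dvd {a b : ℕ} (h : a ∣ b) : B a ∣ B b := by
  obtain ⟨t, rfl⟩ := h; exact B_dvd_mul a t

lemma not_dvd_C {p m : ℕ} (hp : p.Prime) (h : p ∣ B m) : ¬ p ∣ C m := by
  intro hc
  have h1 : p ∣ C m ^ 2 := hc.trans (dvd_pow_self _ two_ne_zero)
  rw [C_sq] at h1
  have h2 : p ∣ 8 * B m ^ 2 := Dvd.dvd.mul_left (h.trans (dvd_pow_self _ two_ne_zero)) 8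
  have h3 : p ∣ 1 := (Nat.dvd_add_right h2).mp h1
  have := hp.two_le
  simp [Nat.dvd_one] at h3
  omega

lemma sub_step {p a b : ℕ} (hp : p.Prime) (h1 : p ∣ B (a+b)) (h2 : p ∣ B b) : p ∣ B a := by
  rw [B_add] at h1
  have h3 : p ∣ B a * C b :=
    (Nat.dvd_add_right (Dvd.dvd.mul_left h2 (C a))).mp (by rwa [add_comm] at h1)
  rcases (Nat.Prime.dvd_mul hp).mp h3 with h | h
  · exact h
  · exact absurd h (not_dvd_C hp h2)

/-- rank of apparition -/
lemma rank_spec {p n : ℕ} (hp : p.Prime) (hn : 0 < n) (h : p ∣ B n) :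
    ∃ r, 0 < r ∧ p ∣ B r ∧ (∀ m, p ∣ B m ↔ r ∣ m) := by
  classical
  have hex : ∃ m, 0 < m ∧ p ∣ B m := ⟨n, hn, h⟩
  set r := Nat.find hex with hrdef
  obtain ⟨hr0, hrB⟩ := Nat.find_spec hex
  have hmin : ∀ m, 0 < m → p ∣ B m → r ≤ m := fun m h1 h2 => Nat.find_le ⟨h1, h2⟩
  refine ⟨r, hr0, hrB, fun m => ⟨?_, fun hm => dvd_trans hrB (B_dvd hm)⟩⟩
  intro hm
  induction m using Nat.strong_induction_on with
  | _ m ih =>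
    rcases Nat.eq_zero_or_pos m with rfl | hm0
    · exact dvd_zero r
    have hrm : r ≤ m := hmin m hm0 hm
    have hsub : p ∣ B (m - r) := sub_step hp (by rwa [Nat.sub_add_cancel hrm]) hrB
    have hd : r ∣ m - r := by
      rcases Nat.eq_zero_or_pos (m - r) with he | hpos
      · simp [he]
      · exact ih (m - r) (by omega) hsub
    have : m = (m - r) + r := by omega
    rw [this]
    exact dvd_add hd dvd_rfl

lemma B_ne (hs : 0 < s) : B s ≠ 0 := (B_pos hs).ne'

lemma lte_coprime {p s t : ℕ} (hp : p.Prime) (hpB : p ∣ B s) (hs : 0 < s) (ht0 : 0 < t)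
    (ht : ¬ p ∣ t) : (B (s*t)).factorization p = (B s).factorization p := by
  obtain ⟨j, k, _, hB⟩ := BC_mul s t
  set U := t * C s ^ (t-1) + 8 * B s ^ 2 * k with hU
  have hfac : B (s*t) = B s * U := by rw [hB, hU]; ring
  have hpU : ¬ p ∣ U := by
    intro hd
    have h8 : p ∣ 8 * B s ^ 2 * k :=
      Dvd.dvd.mul_right (Dvd.dvd.mul_left (hpB.trans (dvd_pow_self _ two_ne_zero)) 8) k
    have h1 : p ∣ t * C s ^ (t-1) := (Nat.dvd_add_left h8).mp hd
    rcases (Nat.Prime.dvd_mul hp).mp h1 with h | h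
    · exact ht h
    · exact not_dvd_C hp hpB (hp.dvd_of_dvd_pow h)
  have hU0 : U ≠ 0 := by
    intro h0
    have hBst : B (s*t) ≠ 0 := B_ne (Nat.mul_pos hs ht0)
    rw [hfac, h0, mul_zero] at hBst
    exact hBst rfl
  rw [hfac, Nat.factorization_mul (B_ne hs) hU0]
  simp [Nat.factorization_eq_zero_of_not_dvd hpU]

lemma lte_p {p s : ℕ} (hp : p.Prime) (hpB : p ∣ B s) (hs : 0 < s) :
    (B (s*p)).factorization p = (B s).factorization p + 1 := by
  obtain ⟨j, k, _, hB⟩ := BC_mul s p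
  set U := p * C s ^ (p-1) + 8 * B s ^ 2 * k with hU
  have hfac : B (s*p) = B s * U := by rw [hB, hU]; ring
  have hppos := hp.pos
  have hU0 : U ≠ 0 := by
    intro h0
    have hBst : B (s*p) ≠ 0 := B_ne (Nat.mul_pos hs hppos)
    rw [hfac, h0, mul_zero] at hBst
    exact hBst rfl
  have h8 : p ∣ 8 * B s ^ 2 * k :=
    Dvd.dvd.mul_right (Dvd.dvd.mul_left (hpB.trans (dvd_pow_self _ two_ne_zero)) 8) k
  have hdU : p ∣ U := dvd_add (Dvd.dvd.mul_right dvd_rfl _) h8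
  have hp2 : ¬ p^2 ∣ U := by
    intro hd
    have h8' : p^2 ∣ 8 * B s ^ 2 * k := by
      have : p^2 ∣ B s ^ 2 := pow_dvd_pow_of_dvd hpB 2
      exact Dvd.dvd.mul_right (Dvd.dvd.mul_left this 8) k
    have h1 : p^2 ∣ p * C s ^ (p-1) := (Nat.dvd_add_left h8').mp hd
    have h2 : p ∣ C s ^ (p-1) := by
      obtain ⟨y, hy⟩ := h1
      refine ⟨y, ?_⟩
      have : p * C s ^ (p-1) = p * (p * y) := by rw [hy]; ring
      exact Nat.eq_of_mul_eq_mul_left hppos this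
    exact not_dvd_C hp hpB (hp.dvd_of_dvd_pow h2)
  have hle : U.factorization p = 1 := by
    have hge : 1 ≤ U.factorization p := by
      rw [← Nat.Prime.pow_dvd_iff_le_factorization hp hU0, pow_one]; exact hdU
    have hlt : ¬ 2 ≤ U.factorization p := by
      rw [← Nat.Prime.pow_dvd_iff_le_factorization hp hU0]; exact hp2
    omega
  rw [hfac, Nat.factorization_mul (B_ne hs) hU0]
  simp [hle]

lemma lte {p r : ℕ} (hp : p.Prime) (hpB : p ∣ B r) (hr : 0 < r) :
    ∀ m, 0 < m → (B (r*m)).factorization p = (B r).factorization p + m.factorization p := by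
  intro m
  induction m using Nat.strong_induction_on with
  | _ m ih =>
    intro hm
    by_cases hpm : p ∣ m
    · obtain ⟨m', rfl⟩ := hpm
      have hm' : 0 < m' := by
        rcases Nat.eq_zero_or_pos m' with rfl | h
        · simp at hm
        · exact h
      have e : r * (p * m') = (r * m') * p := by ring
      have h1 : p ∣ B (r * m') := hpB.trans (B_dvd (Dvd.intro m' rfl))
      rw [e, lte_p hp h1 (Nat.mul_pos hr hm'), ih m' (by nlinarith [hp.two_le]) hm']
      have : (p * m').factorization p = m'.factorization p + 1 := by
        rw [Nat.factorization_mul hp.pos.ne' hm'.ne']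
        simp [Nat.Prime.factorization_self hp, add_comm]
      omega
    · rw [lte_coprime hp hpB hr hm hpm, Nat.factorization_eq_zero_of_not_dvd hpm]
      omega

/-- master valuation formula -/
lemma vB {p r : ℕ} (hp : p.Prime) (hr : 0 < r) (hrank : ∀ m, p ∣ B m ↔ r ∣ m)
    {m : ℕ} (hm : 0 < m) :
    (B m).factorization p =
      if r ∣ m then (B r).factorization p + (m / r).factorization p else 0 := by
  split_ifs with h
  · obtain ⟨u, rfl⟩ := h
    have hu : 0 < u := Nat.pos_of_mul_pos_left (by rwa [mul_comm] at hm)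
    rw [lte hp ((hrank r).mpr dvd_rfl) hr u hu]
    congr 1
    rw [Nat.mul_div_cancel_left _ hr]
  · exact Nat.factorization_eq_zero_of_not_dvd (fun hd => h ((hrank m).mp hd))

lemma sum_moebius_divisors (m : ℕ) : ∑ d ∈ m.divisors, μ d = if m = 1 then 1 else 0 := by
  rcases Nat.eq_zero_or_pos m with rfl | hm
  · simp
  have h := congrArg (fun f : ArithmeticFunction ℤ => f m) moebius_mul_coe_zeta
  simp only [mul_apply, one_apply] at h
  rw [← h, ← Nat.sum_divisorsAntidiagonal (fun a b => (μ a : ℤ))]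
  apply Finset.sum_congr rfl
  intro x hx
  have h2 : x.2 ≠ 0 :=
    (Nat.pos_of_mem_divisors (Nat.snd_mem_divisors_of_mem_antidiagonal hx)).ne'
  rw [natCoe_apply, zeta_apply_ne h2]
  simp

lemma sum_moebius_totient (n : ℕ) (hn : 0 < n) :
    ∑ d ∈ n.divisors, μ d * ((n/d : ℕ) : ℤ) = Nat.totient n := by
  have h := (sum_eq_iff_sum_mul_moebius_eq (R := ℤ)
    (f := fun x => (Nat.totient x : ℤ)) (g := fun x => (x : ℤ))).mp ?_ n hn
  · rw [← h, ← Nat.sum_divisorsAntidiagonal (fun a b => (μ a : ℤ) * (b : ℤ))]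
    simp [Int.cast_id]
  · intro n hn
    rw [← Nat.cast_sum]
    norm_cast
    exact Nat.sum_totient n

lemma moebius_cond {s m : ℕ} (hs : s ∣ m) (h0 : 0 < m) :
    ∑ d ∈ m.divisors, μ d * (if s ∣ m / d then 1 else 0) = if m = s then 1 else 0 := by
  have hs0 : 0 < s := Nat.pos_of_dvd_of_pos hs h0
  have key : ∀ d ∈ m.divisors, (μ d * (if s ∣ m / d then 1 else 0) : ℤ)
      = if d ∈ (m/s).divisors then μ d else 0 := by
    intro d hd
    obtain ⟨hdm, hm0⟩ := Nat.mem_divisors.mp hd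
    have hiff : s ∣ m / d ↔ d ∈ (m/s).divisors := by
      rw [Nat.mem_divisors]
      constructor
      · intro h
        refine ⟨?_, (Nat.div_pos (Nat.le_of_dvd h0 hs) hs0).ne'⟩
        rw [Nat.dvd_div_iff_mul_dvd hs]
        have := Nat.mul_dvd_of_dvd_div hdm h
        exact (mul_comm s d) ▸ this
      · rintro ⟨h, -⟩
        rw [Nat.dvd_div_iff_mul_dvd hdm]
        rw [Nat.dvd_div_iff_mul_dvd hs] at h
        exact (mul_comm d s) ▸ h
    by_cases hc : s ∣ m / d
    · rw [if_pos hc, if_pos (hiff.mp hc), mul_one]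
    · rw [if_neg hc, if_neg (fun hmem => hc (hiff.mpr hmem)), mul_zero]
  have hdiv1 : m / s = 1 ↔ m = s := by
    constructor
    · intro h
      have := Nat.eq_mul_of_div_eq_right hs h
      omega
    · rintro rfl
      exact Nat.div_self hs0
  rw [Finset.sum_congr rfl key, Finset.sum_ite_mem, Finset.inter_comm,
    Finset.inter_eq_left.mpr ?_, sum_moebius_divisors]
  · rcases eq_or_ne m s with rfl | hne
    · simp [hdiv1]
    · rw [if_neg (fun h => hne (hdiv1.mp h)), if_neg hne]
  · intro d hd
    exact Nat.mem_divisors.mpr ⟨(Nat.mem_divisors.mp hd).1.trans (Nat.div_dvd_of_dvd hs), h0.ne'⟩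

lemma moebius_trichotomy (d : ℕ) : μ d = 1 ∨ μ d = -1 ∨ μ d = 0 := by
  by_cases h : Squarefree d
  · rw [moebius_apply_of_squarefree h]
    rcases Nat.even_or_odd (Ω d) with he | ho
    · left; exact Even.neg_one_pow he
    · right; left; exact Odd.neg_one_pow ho
  · right; right; exact moebius_eq_zero_of_not_squarefree h

lemma sum_moebius_split (n : ℕ) (F : ℕ → ℤ) :
    ∑ d ∈ n.divisors, μ d * F d =
      (∑ d ∈ n.divisors.filter (fun d => μ d = 1), F d)
      - (∑ d ∈ n.divisors.filter (fun d => μ d = -1), F d) := by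
  classical
  rw [← Finset.sum_filter_add_sum_filter_not n.divisors (fun d => μ d = 1) (fun d => μ d * F d)]
  have h1 : ∑ d ∈ n.divisors.filter (fun d => μ d = 1), μ d * F d
      = ∑ d ∈ n.divisors.filter (fun d => μ d = 1), F d := by
    apply Finset.sum_congr rfl
    intro d hd
    rw [(Finset.mem_filter.mp hd).2, one_mul]
  have h2 : ∑ d ∈ (n.divisors.filter (fun d => ¬ μ d = 1)), μ d * F d
      = ∑ d ∈ n.divisors.filter (fun d => μ d = -1), -F d := by
    rw [Finset.sum_filter, Finset.sum_filter]
    apply Finset.sum_congr rfl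
    intro d hd
    rcases moebius_trichotomy d with h | h | h <;> simp [h]
  rw [h1, h2, Finset.sum_neg_distrib]
  ring


lemma two_pow_helper (m : ℕ) (hm : 3 ≤ m) : m < 2^(m-1) := by
  induction m with
  | zero => omega
  | succ k ih =>
    rcases Nat.lt_or_ge k 3 with h | h
    · interval_cases k <;> simp_all
    · have := ih (by omega)
      have e : k+1-1 = (k-1)+1 := by omega
      rw [e, pow_succ]
      omega

lemma pow_two_split (k : ℕ) (hk : 0 < k) : 2^k = 2 * 2^(k-1) := by
  conv_lhs => rw [show k = (k-1)+1 by omega]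
  rw [pow_succ]; ring

lemma tot_bound_aux : ∀ n : ℕ, (2 ≤ n → 2*n ≤ 4^(Nat.totient n)) ∧
    (Odd n → 3 ≤ n → 4*n ≤ 4^(Nat.totient n)) := by
  intro n
  induction n using Nat.recOnPosPrimePosCoprime with
  | zero => exact ⟨by omega, by omega⟩
  | one => exact ⟨by omega, by omega⟩
  | prime_pow p k hp hk =>
    have hpn : Nat.Prime p := hp
    have hp2 := hpn.two_le
    rw [Nat.totient_prime_pow hpn hk]
    rcases eq_or_ne p 2 with rfl | hodd
    · constructor
      · intro _
        have h1 : k < 2^k := Nat.lt_two_pow_self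
        have h6 := pow_two_split k hk
        have h4 : (4:ℕ)^(2^(k-1) * (2-1)) = 2^(2^k) := by
          rw [show (4:ℕ) = 2^2 from rfl, ← pow_mul]
          congr 1
          omega
        rw [h4]
        calc 2 * 2^k = 2^(k+1) := by rw [pow_succ]; ring
          _ ≤ 2^(2^k) := Nat.pow_le_pow_right (by omega) (by omega)
      · intro ho _
        exfalso
        rcases ho with ⟨j, hj⟩
        have : (2:ℕ) ∣ 2^k := dvd_pow_self 2 (by omega)
        omega
    · have hp3 : 3 ≤ p := by omega
      have key : 4 * p^k ≤ 4^(p^(k-1) * (p-1)) := by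
        have h1 : p < 2^(p-1) := two_pow_helper p hp3
        have h2 : p^k ≤ 2^((p-1)*k) := by
          calc p^k ≤ (2^(p-1))^k := Nat.pow_le_pow_left (by omega) k
            _ = 2^((p-1)*k) := by rw [← pow_mul]
        have hq : 0 < p^(k-1) := Nat.pow_pos (by omega)
        have hpk' : k + 1 ≤ 2 * p^(k-1) := by
          have hlt : k < 2^k := Nat.lt_two_pow_self
          have h5 : 2^(k-1) ≤ p^(k-1) := Nat.pow_le_pow_left (by omega) _
          have h6 := pow_two_split k hk
          omega
        have hX : 2 ≤ p - 1 := by omega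
        have hmul : (k+1) * (p-1) ≤ (2*p^(k-1)) * (p-1) := Nat.mul_le_mul_right _ hpk'
        have h3 : 2 + (p-1)*k ≤ 2 * (p^(k-1) * (p-1)) := by nlinarith [hmul, hX]
        calc 4 * p^k ≤ 4 * 2^((p-1)*k) := by omega
          _ = 2^(2 + (p-1)*k) := by rw [pow_add]; norm_num
          _ ≤ 2^(2 * (p^(k-1) * (p-1))) := Nat.pow_le_pow_right (by omega) h3
          _ = 4^(p^(k-1) * (p-1)) := by rw [show (4:ℕ) = 2^2 from rfl, ← pow_mul]
      refine ⟨fun _ => by omega, fun _ _ => key⟩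
  | coprime a b ha hb hab iha ihb =>
    have hφa : 1 ≤ Nat.totient a := Nat.totient_pos.mpr (by omega)
    have hφb : 1 ≤ Nat.totient b := Nat.totient_pos.mpr (by omega)
    rw [Nat.totient_mul hab]
    have hsum : Nat.totient a + Nat.totient b ≤ Nat.totient a * Nat.totient b + 1 := by nlinarith
    have hpow : (4:ℕ)^(Nat.totient a + Nat.totient b) ≤ 4 * 4^(Nat.totient a * Nat.totient b) := by
      calc (4:ℕ)^(Nat.totient a + Nat.totient b) ≤ 4^(Nat.totient a * Nat.totient b + 1) :=
            Nat.pow_le_pow_right (by omega) hsum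
        _ = 4 * 4^(Nat.totient a * Nat.totient b) := by rw [pow_succ]; ring
    have main : ∀ oa : Bool, ∀ ob : Bool,
        (if oa then 4*a else 2*a) ≤ 4^(Nat.totient a) →
        (if ob then 4*b else 2*b) ≤ 4^(Nat.totient b) →
        (oa || ob) = true → 2*(a*b) ≤ 4^(Nat.totient a * Nat.totient b) := by
      intro oa ob h1 h2 hor
      have hmul : (if oa then 4*a else 2*a) * (if ob then 4*b else 2*b)
          ≤ 4^(Nat.totient a) * 4^(Nat.totient b) := Nat.mul_le_mul h1 h2
      rw [← pow_add] at hmul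
      cases oa <;> cases ob <;> simp_all <;> nlinarith
    have hodd_of : ∀ m : ℕ, 1 < m → Odd m → 3 ≤ m := by
      intro m hm ⟨j, hj⟩; omega
    constructor
    · intro _
      rcases Nat.even_or_odd a with hea | hoa
      · have hob : Odd b := by
          rcases Nat.even_or_odd b with heb | hob
          · exfalso
            obtain ⟨x, hx⟩ := hea; obtain ⟨y, hy⟩ := heb
            have : 2 ∣ Nat.gcd a b := Nat.dvd_gcd ⟨x, by omega⟩ ⟨y, by omega⟩
            rw [Nat.Coprime] at hab
            omega
          · exact hob
        exact main false true (by simpa using iha.1 (by omega))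
          (by simpa using ihb.2 hob (hodd_of b hb hob)) rfl
      · exact main true false (by simpa using iha.2 hoa (hodd_of a ha hoa))
          (by simpa using ihb.1 (by omega)) rfl
    · intro hoab _
      obtain ⟨hoa, hob⟩ := (Nat.odd_mul).mp hoab
      have h1 := iha.2 hoa (hodd_of a ha hoa)
      have h2 := ihb.2 hob (hodd_of b hb hob)
      have hmul : (4*a) * (4*b) ≤ 4^(Nat.totient a) * 4^(Nat.totient b) := Nat.mul_le_mul h1 h2
      rw [← pow_add] at hmul
      nlinarith

lemma tot_bound {n : ℕ} (hn : 2 ≤ n) : 2*n ≤ 4^(Nat.totient n) := (tot_bound_aux n).1 hn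

noncomputable def al : ℝ := 3 + Real.sqrt 8
noncomputable def be : ℝ := 3 - Real.sqrt 8

lemma h8 : Real.sqrt 8 ^ 2 = 8 := Real.sq_sqrt (by norm_num)
lemma sqrt8_nonneg : 0 ≤ Real.sqrt 8 := Real.sqrt_nonneg 8
lemma sqrt8_lt : Real.sqrt 8 < 3 := by nlinarith [h8, sqrt8_nonneg]
lemma sqrt8_gt : (280/99 : ℝ) ≤ Real.sqrt 8 := by nlinarith [h8, sqrt8_nonneg]
lemma be_nonneg : 0 ≤ be := by unfold be; linarith [sqrt8_lt]
lemma al_ge_four : 4 ≤ al := by unfold al; linarith [sqrt8_gt]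
lemma al_pos : 0 < al := by linarith [al_ge_four]
lemma albe : al * be = 1 := by unfold al be; nlinarith [h8]
lemma besq_le : be^2 ≤ 1/33 := by unfold be; nlinarith [sqrt8_gt, h8]
lemma besq_nonneg : 0 ≤ be^2 := sq_nonneg be

lemma B_closed (m : ℕ) : (B m : ℝ) * (2*Real.sqrt 8) = al^m - be^m := by
  induction m using Nat.strong_induction_on with
  | _ m ih =>
    match m with
    | 0 => simp [B_zero]
    | 1 => rw [B_one]; unfold al be; push_cast; ring
    | (m+2) =>
      have ih1 := ih m (by omega)
      have ih2 := ih (m+1) (by omega)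
      have hcast : (B (m+2):ℝ) + (B m : ℝ) = 6 * (B (m+1) : ℝ) := by
        exact_mod_cast congrArg (Nat.cast : ℕ → ℝ) (B_rec m)
      have hal : al^2 = 6*al - 1 := by unfold al; nlinarith [h8]
      have hbe : be^2 = 6*be - 1 := by unfold be; nlinarith [h8]
      have hB : (B (m+2):ℝ) = 6 * (B (m+1) : ℝ) - B m := by linarith
      rw [hB]
      have e1 : al^(m+2) = al^m * al^2 := by ring
      have e2 : be^(m+2) = be^m * be^2 := by ring
      rw [e1, e2, hal, hbe]
      linear_combination 6*ih2 - ih1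

lemma B_closed' (m : ℕ) : (B m : ℝ) * (2*Real.sqrt 8) = al^m * (1 - (be^2)^m) := by
  rw [B_closed]
  have h1 : al^m * (be^2)^m = be^m := by
    rw [← mul_pow]
    congr 1
    calc al * be^2 = (al*be)*be := by ring
      _ = be := by rw [albe]; ring
  nlinarith [h1]

lemma one_sub_sum_le_prod (S : Finset ℕ) (x : ℕ → ℝ) (h0 : ∀ i ∈ S, 0 ≤ x i)
    (h1 : ∀ i ∈ S, x i ≤ 1) : 1 - ∑ i ∈ S, x i ≤ ∏ i ∈ S, (1 - x i) := by
  classical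
  induction S using Finset.induction_on with
  | empty => simp
  | @insert a S ha ih =>
    rw [Finset.sum_insert ha, Finset.prod_insert ha]
    have hxa0 := h0 a (Finset.mem_insert_self a S)
    have hxa1 := h1 a (Finset.mem_insert_self a S)
    have ih' := ih (fun i hi => h0 i (Finset.mem_insert_of_mem hi))
      (fun i hi => h1 i (Finset.mem_insert_of_mem hi))
    have hsum : 0 ≤ ∑ i ∈ S, x i :=
      Finset.sum_nonneg (fun i hi => h0 i (Finset.mem_insert_of_mem hi))
    nlinarith [ih', hsum]

lemma geom_bound (k : ℕ) : ∑ j ∈ Finset.range k, ((1:ℝ)/33)^j ≤ 33/32 := by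
  have h := geom_sum_eq (show ((1:ℝ)/33) ≠ 1 by norm_num) k
  rw [h]
  have h2 : (0:ℝ) ≤ (1/33)^k := by positivity
  have h3 : ((1:ℝ)/33)^k ≤ 1 := pow_le_one₀ (by norm_num) (by norm_num)
  rw [div_le_iff_of_neg (by norm_num : ((1:ℝ)/33 - 1) < 0)]
  nlinarith

lemma geom_Icc (n : ℕ) : ∑ m ∈ Finset.Icc 1 n, ((1:ℝ)/33)^m ≤ 1/32 := by
  have he : ∑ m ∈ Finset.Icc 1 n, ((1:ℝ)/33)^m = ∑ j ∈ Finset.range n, (1/33) * ((1:ℝ)/33)^j := by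
    rw [← Finset.Ico_add_one_right_eq_Icc, Finset.sum_Ico_eq_sum_range, Nat.add_sub_cancel]
    apply Finset.sum_congr rfl
    intro j _
    rw [pow_add, pow_one]
  rw [he, ← Finset.mul_sum]
  have := geom_bound n
  nlinarith

lemma err_sum {n : ℕ} (hn : 1 ≤ n) (S : Finset ℕ) (hS : S ⊆ n.divisors) :
    ∑ d ∈ S, ((be^2))^(n/d) ≤ 1/32 := by
  have step1 : ∑ d ∈ S, ((be^2))^(n/d) ≤ ∑ d ∈ S, ((1:ℝ)/33)^(n/d) :=
    Finset.sum_le_sum (fun d _ => pow_le_pow_left₀ besq_nonneg besq_le _)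
  have hinj : Set.InjOn (fun d => n / d) S := by
    intro a ha b hb hab
    have hda := Nat.mem_divisors.mp (hS ha)
    have hdb := Nat.mem_divisors.mp (hS hb)
    have ha' := Nat.div_div_self hda.1 hda.2
    have hb' := Nat.div_div_self hdb.1 hdb.2
    simp only at hab
    rw [← ha', ← hb', hab]
  have step2 : ∑ d ∈ S, ((1:ℝ)/33)^(n/d) = ∑ m ∈ S.image (fun d => n / d), ((1:ℝ)/33)^m := by
    rw [Finset.sum_image (fun a ha b hb => hinj ha hb)]
  have himg : S.image (fun d => n / d) ⊆ Finset.Icc 1 n := by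
    intro m hm
    obtain ⟨d, hd, rfl⟩ := Finset.mem_image.mp hm
    have hdd := Nat.mem_divisors.mp (hS hd)
    have hd0 : 0 < d := Nat.pos_of_dvd_of_pos hdd.1 (by omega)
    rw [Finset.mem_Icc]
    constructor
    · exact Nat.one_le_div_iff hd0 |>.mpr (Nat.le_of_dvd (by omega) hdd.1)
    · exact Nat.div_le_self n d
  have step3 : ∑ m ∈ S.image (fun d => n / d), ((1:ℝ)/33)^m ≤ ∑ m ∈ Finset.Icc 1 n, ((1:ℝ)/33)^m :=
    Finset.sum_le_sum_of_subset_of_nonneg himg (fun m _ _ => by positivity)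
  calc ∑ d ∈ S, ((be^2))^(n/d) ≤ ∑ d ∈ S, ((1:ℝ)/33)^(n/d) := step1
    _ = _ := step2
    _ ≤ ∑ m ∈ Finset.Icc 1 n, ((1:ℝ)/33)^m := step3
    _ ≤ 1/32 := geom_Icc n

lemma err_prod {n : ℕ} (hn : 1 ≤ n) (S : Finset ℕ) (hS : S ⊆ n.divisors) :
    (31/32:ℝ) ≤ ∏ d ∈ S, (1 - (be^2)^(n/d)) := by
  have h0 : ∀ d ∈ S, 0 ≤ (be^2)^(n/d) := fun d _ => by positivity
  have h1 : ∀ d ∈ S, (be^2)^(n/d) ≤ 1 :=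
    fun d _ => pow_le_one₀ besq_nonneg (by nlinarith [besq_le])
  have := one_sub_sum_le_prod S (fun d => (be^2)^(n/d)) h0 h1
  have := err_sum hn S hS
  calc (31/32:ℝ) = 1 - 1/32 := by norm_num
    _ ≤ 1 - ∑ d ∈ S, ((be^2))^(n/d) := by linarith
    _ ≤ _ := by assumption

lemma prod_closed (n : ℕ) (S : Finset ℕ) :
    (∏ d ∈ S, (B (n/d) : ℝ)) * (2*Real.sqrt 8)^S.card
      = al^(∑ d ∈ S, n/d) * ∏ d ∈ S, (1 - (be^2)^(n/d)) := by
  rw [← Finset.prod_const, ← Finset.prod_mul_distrib, ← Finset.prod_pow_eq_pow_sum,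
    ← Finset.prod_mul_distrib]
  exact Finset.prod_congr rfl (fun d _ => B_closed' (n/d))

lemma analytic {n : ℕ} (hn : 2 ≤ n) (S T : Finset ℕ)
    (hS : S ⊆ n.divisors) (hT : T ⊆ n.divisors)
    (hcard : S.card = T.card)
    (hphi : ∑ d ∈ S, n/d = Nat.totient n + ∑ d ∈ T, n/d) :
    (n : ℝ) * ∏ d ∈ T, (B (n/d) : ℝ) < ∏ d ∈ S, (B (n/d) : ℝ) := by
  have hK : (0:ℝ) < 2*Real.sqrt 8 := by nlinarith [sqrt8_gt]
  have hKpow : (0:ℝ) < (2*Real.sqrt 8)^T.card := by positivity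
  have hA := prod_closed n S
  have hC := prod_closed n T
  -- bound the phi part
  have hphi_bound : (n:ℝ) * (32/31) < al^(Nat.totient n) := by
    have h1 : (2*n : ℝ) ≤ (4:ℝ)^(Nat.totient n) := by
      exact_mod_cast tot_bound hn
    have h2 : (4:ℝ)^(Nat.totient n) ≤ al^(Nat.totient n) :=
      pow_le_pow_left₀ (by norm_num) al_ge_four _
    have hn' : (2:ℝ) ≤ (n:ℝ) := by exact_mod_cast hn
    nlinarith [h1, h2, hn']
  have hP : (31/32:ℝ) ≤ ∏ d ∈ S, (1 - (be^2)^(n/d)) := err_prod (by omega) S hS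
  have hQ1 : ∏ d ∈ T, (1 - (be^2)^(n/d)) ≤ 1 := by
    apply Finset.prod_le_one
    · intro d _
      have : (be^2)^(n/d) ≤ 1 := pow_le_one₀ besq_nonneg (by nlinarith [besq_le])
      -- need 0 ≤ 1 - x : but x could be... need x ≤ 1
      nlinarith [pow_nonneg besq_nonneg (n/d)]
    · intro d _
      nlinarith [pow_nonneg besq_nonneg (n/d)]
  have halpow : ∀ k : ℕ, (0:ℝ) < al^k := fun k => pow_pos al_pos k
  -- A * K^card ≥ (31/32) al^ΣS ; C * K^card = al^ΣT * Q ≤ al^ΣT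
  have hCle : (∏ d ∈ T, (B (n/d) : ℝ)) * (2*Real.sqrt 8)^T.card ≤ al^(∑ d ∈ T, n/d) := by
    rw [hC]
    nlinarith [halpow (∑ d ∈ T, n/d), hQ1,
      (err_prod (show 1 ≤ n by omega) T hT)]
  have hAge : (31/32:ℝ) * al^(∑ d ∈ S, n/d) ≤ (∏ d ∈ S, (B (n/d) : ℝ)) * (2*Real.sqrt 8)^S.card := by
    rw [hA]
    nlinarith [halpow (∑ d ∈ S, n/d), hP]
  have hsplit : al^(∑ d ∈ S, n/d) = al^(Nat.totient n) * al^(∑ d ∈ T, n/d) := by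
    rw [hphi, pow_add]
  have hCpos : (0:ℝ) < ∏ d ∈ T, (B (n/d) : ℝ) := by
    apply Finset.prod_pos
    intro d hd
    have hdvd := Nat.mem_divisors.mp (hT hd)
    have : 0 < B (n/d) := B_pos (Nat.div_pos (Nat.le_of_dvd (by omega) hdvd.1)
      (Nat.pos_of_dvd_of_pos hdvd.1 (by omega)))
    exact_mod_cast this
  -- combine
  have key : (n:ℝ) * ((∏ d ∈ T, (B (n/d) : ℝ)) * (2*Real.sqrt 8)^T.card)
      < (∏ d ∈ S, (B (n/d) : ℝ)) * (2*Real.sqrt 8)^S.card := by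
    calc (n:ℝ) * ((∏ d ∈ T, (B (n/d) : ℝ)) * (2*Real.sqrt 8)^T.card)
        ≤ (n:ℝ) * al^(∑ d ∈ T, n/d) := by
          apply mul_le_mul_of_nonneg_left hCle (by positivity)
      _ < (31/32) * al^(Nat.totient n) * al^(∑ d ∈ T, n/d) := by
          have := halpow (∑ d ∈ T, n/d)
          have h31 : (n:ℝ) < (31/32) * al^(Nat.totient n) := by nlinarith [hphi_bound]
          nlinarith [this, h31]
      _ = (31/32) * al^(∑ d ∈ S, n/d) := by rw [hsplit]; ring
      _ ≤ _ := hAge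
  rw [hcard, ← mul_assoc] at key
  exact lt_of_mul_lt_mul_right key hKpow.le

lemma v_expand {p n r m e : ℕ} (hp : p.Prime) (hn : 0 < n) (hm : m ∣ n) (hm0 : 0 < m)
    (hr0 : 0 < r) :
    ((if r ∣ m then e + (m/r).factorization p else 0 : ℕ) : ℤ)
      = (e : ℤ) * (if r ∣ m then 1 else 0)
        + ∑ j ∈ Finset.Icc 1 (n.factorization p), (if r*p^j ∣ m then 1 else 0) := by
  by_cases hrm : r ∣ m
  · rw [if_pos hrm, if_pos hrm, mul_one]
    set v := (m/r).factorization p with hv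
    set J := n.factorization p with hJ
    have hmr0 : m / r ≠ 0 := (Nat.div_pos (Nat.le_of_dvd hm0 hrm) hr0).ne'
    have hvJ : v ≤ J := by
      have hdvd : m / r ∣ n := (Nat.div_dvd_of_dvd hrm).trans hm
      have := (Nat.factorization_le_iff_dvd hmr0 hn.ne').mpr hdvd
      exact this p
    have hcong : ∀ j ∈ Finset.Icc 1 J, ((if r*p^j ∣ m then 1 else 0 : ℤ))
        = if j ≤ v then 1 else 0 := by
      intro j _
      have hiff : r*p^j ∣ m ↔ j ≤ v := by
        rw [← Nat.dvd_div_iff_mul_dvd hrm, hv,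
          ← Nat.Prime.pow_dvd_iff_le_factorization hp hmr0]
      by_cases hc : r*p^j ∣ m
      · rw [if_pos hc, if_pos (hiff.mp hc)]
      · rw [if_neg hc, if_neg (fun hle => hc (hiff.mpr hle))]
    rw [Finset.sum_congr rfl hcong]
    have hval : ∑ j ∈ Finset.Icc 1 J, (if j ≤ v then (1:ℤ) else 0) = v := by
      have hfil : (Finset.Icc 1 J).filter (fun j => j ≤ v) = Finset.Icc 1 v := by
        ext j
        simp only [Finset.mem_filter, Finset.mem_Icc]
        omega
      rw [← Finset.sum_filter, hfil, Finset.sum_const, Nat.card_Icc]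
      simp
    rw [hval]
    push_cast
    ring
  · rw [if_neg hrm, if_neg hrm, mul_zero]
    have : ∀ j ∈ Finset.Icc 1 (n.factorization p), ((if r*p^j ∣ m then 1 else 0 : ℤ)) = 0 := by
      intro j _
      rw [if_neg (fun hd => hrm ((Dvd.intro (p^j) rfl).trans hd))]
    rw [Finset.sum_congr rfl this]
    simp

lemma key_vp {p n r e : ℕ} (hp : p.Prime) (hn : 2 ≤ n) (hr0 : 0 < r) (hrn : r ∣ n)
    (hrlt : r < n) (v : ℕ → ℕ)
    (hv : ∀ m, m ∣ n → 0 < m → v m = if r ∣ m then e + (m/r).factorization p else 0) :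
    (∑ d ∈ n.divisors.filter (fun d => μ d = 1), (v (n/d) : ℤ))
      ≤ (∑ d ∈ n.divisors.filter (fun d => μ d = -1), (v (n/d) : ℤ)) + n.factorization p := by
  have hn0 : 0 < n := by omega
  set J := n.factorization p with hJ
  have hsplit := sum_moebius_split n (fun d => (v (n/d) : ℤ))
  have hmain : ∑ d ∈ n.divisors, μ d * (v (n/d) : ℤ) ≤ J := by
    have hterm : ∀ d ∈ n.divisors, μ d * (v (n/d) : ℤ)
        = (e:ℤ) * (μ d * (if r ∣ n/d then 1 else 0))
          + ∑ j ∈ Finset.Icc 1 J, μ d * (if r*p^j ∣ n/d then 1 else 0) := by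
      intro d hd
      obtain ⟨hdvd, _⟩ := Nat.mem_divisors.mp hd
      have hd0 : 0 < d := Nat.pos_of_dvd_of_pos hdvd hn0
      have hnd : n/d ∣ n := Nat.div_dvd_of_dvd hdvd
      have hnd0 : 0 < n/d := Nat.div_pos (Nat.le_of_dvd hn0 hdvd) hd0
      rw [hv (n/d) hnd hnd0, v_expand hp hn0 hnd hnd0 hr0, mul_add, Finset.mul_sum]
      ring
    rw [Finset.sum_congr rfl hterm, Finset.sum_add_distrib, ← Finset.mul_sum,
      Finset.sum_comm, moebius_cond hrn hn0]
    have hne : n ≠ r := by omega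
    rw [if_neg hne, mul_zero, zero_add]
    have hbound : ∀ j ∈ Finset.Icc 1 J,
        (∑ d ∈ n.divisors, μ d * (if r*p^j ∣ n/d then 1 else 0)) ≤ 1 := by
      intro j _
      by_cases hs : r*p^j ∣ n
      · rw [moebius_cond hs hn0]
        split_ifs <;> omega
      · have hzero : ∀ d ∈ n.divisors, μ d * (if r*p^j ∣ n/d then (1:ℤ) else 0) = 0 := by
          intro d hd
          rw [if_neg (fun hdd => hs (hdd.trans (Nat.div_dvd_of_dvd (Nat.mem_divisors.mp hd).1))),
            mul_zero]
        rw [Finset.sum_congr rfl hzero]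
        simp
    calc ∑ j ∈ Finset.Icc 1 J, ∑ d ∈ n.divisors, μ d * (if r*p^j ∣ n/d then (1:ℤ) else 0)
        ≤ ∑ j ∈ Finset.Icc 1 J, 1 := Finset.sum_le_sum hbound
      _ = J := by rw [Finset.sum_const, Nat.card_Icc]; simp
  omega

theorem stmt4 : ∀ n : ℕ, 1 < n →
    ∃ p : ℕ, p.Prime ∧ p ∣ B n ∧ ∀ m : ℕ, 0 < m → m < n → ¬ p ∣ B m := by
  intro n hn
  by_contra hcon
  push_neg at hcon
  have hn0 : 0 < n := by omega
  have hn2 : 2 ≤ n := hn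
  classical
  set S := n.divisors.filter (fun d => μ d = 1) with hSdef
  set T := n.divisors.filter (fun d => μ d = -1) with hTdef
  have hS : S ⊆ n.divisors := Finset.filter_subset _ _
  have hT : T ⊆ n.divisors := Finset.filter_subset _ _
  have hBnd0 : ∀ d ∈ n.divisors, B (n/d) ≠ 0 := by
    intro d hd
    obtain ⟨hdvd, _⟩ := Nat.mem_divisors.mp hd
    exact (B_pos (Nat.div_pos (Nat.le_of_dvd hn0 hdvd) (Nat.pos_of_dvd_of_pos hdvd hn0))).ne'
  set A := ∏ d ∈ S, B (n/d) with hAdef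
  set Cc := ∏ d ∈ T, B (n/d) with hCdef
  have hA0 : A ≠ 0 := Finset.prod_ne_zero_iff.mpr (fun d hd => hBnd0 d (hS hd))
  have hC0 : Cc ≠ 0 := Finset.prod_ne_zero_iff.mpr (fun d hd => hBnd0 d (hT hd))
  -- cardinalities agree
  have hcard : S.card = T.card := by
    have h0 : ∑ d ∈ n.divisors, μ d = 0 := by
      rw [sum_moebius_divisors, if_neg (by omega)]
    have h1 := sum_moebius_split n (fun _ => (1:ℤ))
    rw [← hSdef, ← hTdef] at h1
    simp only [mul_one, Finset.sum_const, nsmul_eq_mul] at h1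
    rw [h0] at h1
    have : (S.card : ℤ) = T.card := by linarith
    exact_mod_cast this
  -- totient identity
  have hphi : ∑ d ∈ S, n/d = Nat.totient n + ∑ d ∈ T, n/d := by
    have h1 := sum_moebius_totient n hn0
    have h2 := sum_moebius_split n (fun d => ((n/d : ℕ) : ℤ))
    rw [← hSdef, ← hTdef] at h2
    rw [h1] at h2
    have : ((∑ d ∈ S, n/d : ℕ) : ℤ) = Nat.totient n + ((∑ d ∈ T, n/d : ℕ) : ℤ) := by
      push_cast at h2 ⊢
      linarith
    exact_mod_cast this
  -- divisibility A ∣ Cc * n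
  have fact_prod : ∀ (U : Finset ℕ), U ⊆ n.divisors → ∀ p : ℕ,
      (∏ d ∈ U, B (n/d)).factorization p = ∑ d ∈ U, (B (n/d)).factorization p := by
    intro U hU p
    induction U using Finset.induction_on with
    | empty => simp
    | @insert a U ha ih =>
      rw [Finset.prod_insert ha, Finset.sum_insert ha,
        Nat.factorization_mul (hBnd0 a (hU (Finset.mem_insert_self a U)))
          (Finset.prod_ne_zero_iff.mpr (fun d hd => hBnd0 d (hU (Finset.mem_insert_of_mem hd)))),
        Finsupp.add_apply, ih (fun d hd => hU (Finset.mem_insert_of_mem hd))]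
  have hdvd : A ∣ Cc * n := by
    rw [← Nat.factorization_le_iff_dvd hA0 (by positivity)]
    rw [Finsupp.le_def]
    intro p
    by_cases hp : p.Prime
    · rw [hAdef, hCdef, fact_prod S hS p, Nat.factorization_mul hC0 hn0.ne',
        Finsupp.add_apply, fact_prod T hT p]
      by_cases hpB : p ∣ B n
      · obtain ⟨r, hr0, hrB, hiff⟩ := rank_spec hp hn0 hpB
        have hrn : r ∣ n := (hiff n).mp hpB
        obtain ⟨m0, hm00, hm0n, hpm0⟩ := hcon p hp hpB
        have hrlt : r < n := lt_of_le_of_lt (Nat.le_of_dvd hm00 ((hiff m0).mp hpm0)) hm0n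
        have hv : ∀ m, m ∣ n → 0 < m → (B m).factorization p =
            if r ∣ m then (B r).factorization p + (m/r).factorization p else 0 :=
          fun m _ hm0 => vB hp hr0 hiff hm0
        have key := key_vp hp hn2 hr0 hrn hrlt (fun m => (B m).factorization p) hv
        have hcast : ((∑ d ∈ S, (B (n/d)).factorization p : ℕ) : ℤ)
            ≤ ((∑ d ∈ T, (B (n/d)).factorization p : ℕ) : ℤ) + (n.factorization p : ℤ) := by
          push_cast
          exact key
        exact_mod_cast hcast
      · have hzero : ∀ d ∈ S, (B (n/d)).factorization p = 0 := by
          intro d hd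
          apply Nat.factorization_eq_zero_of_not_dvd
          intro hdd
          exact hpB (hdd.trans (B_dvd (Nat.div_dvd_of_dvd (Nat.mem_divisors.mp (hS hd)).1)))
        rw [Finset.sum_eq_zero hzero]
        omega
    · rw [Nat.factorization_eq_zero_of_not_prime _ hp]
      omega
  have hle : A ≤ Cc * n := Nat.le_of_dvd (by positivity) hdvd
  have hana := analytic hn2 S T hS hT hcard hphi
  have hana' : (n : ℝ) * (Cc : ℝ) < (A : ℝ) := by
    rw [hAdef, hCdef]
    push_cast
    exact hana
  have : n * Cc < A := by exact_mod_cast hana'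
  have : Cc * n < A := by rwa [mul_comm] at this
  omega
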